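/- arXiv:1406.4070 — 2 statements merged into one kernel-verified Lean document; each statement's English description precedes it below -/
import Mathlib

section
/- Let C_{2k} be the even cycle and let v ∈ ℤ^{2k}_{≥0} be a point in the real cone generated by the vertex vectors V(e) (e an edge of C_{2k}) such that v_i = 0 for some index i. Then v has a unique expression as a non-negative real linear combination of the vectors V(e), and moreover all coefficients in this expression are non-negative integers; specifically, the coefficient of V(j, j+1) equals the alternating sum v_j − v_{j−1} + v_{j−2} − ⋯ ± v_i. -/
open Fin.NatCast in
/-- Edges of the cycle `C_{2k}` are indexed by `j : Fin (2k)`, edge `j` joining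
vertices `j` and `j+1`; `V j` is its 0/1 indicator vector. -/
theorem stmt_9 (k : ℕ) [NeZero (2 * k)]
    (V : Fin (2 * k) → Fin (2 * k) → ℝ)
    (hV : ∀ j x, V j x = if x = j ∨ x = j + 1 then 1 else 0)
    (v : Fin (2 * k) → ℤ) (i : Fin (2 * k)) (hi : v i = 0)
    (c : Fin (2 * k) → ℝ) (hc0 : ∀ j, 0 ≤ c j)
    (hcv : ∀ x, (v x : ℝ) = ∑ j, c j * V j x) :
    (∀ c' : Fin (2 * k) → ℝ, (∀ j, 0 ≤ c' j) →
        (∀ x, (v x : ℝ) = ∑ j, c' j * V j x) → c' = c) ∧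
    (∀ j, ∃ n : ℕ, c j = (n : ℝ)) ∧
    (∀ t : ℕ, t < 2 * k →
      c (i + (t : Fin (2 * k))) =
        ∑ s ∈ Finset.range t,
          (-1 : ℝ) ^ (t - 1 - s) * (v (i + ((s + 1 : ℕ) : Fin (2 * k))) : ℝ)) := by
  have h2k : 2 ≤ 2 * k := by
    have := NeZero.pos (2 * k); omega
  have hone : (1 : Fin (2 * k)) ≠ 0 := by
    rw [Ne, Fin.one_eq_zero_iff]; omega
  -- v x = c (x-1) + c x for any admissible c
  have key : ∀ (c : Fin (2 * k) → ℝ), (∀ x, (v x : ℝ) = ∑ j, c j * V j x) →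
      ∀ x, (v x : ℝ) = c (x - 1) + c x := by
    intro c hcv x
    have hne : x - 1 ≠ x := by
      intro h; exact hone (by rwa [sub_eq_self] at h)
    have hne' : x ≠ x - 1 := fun h => hne h.symm
    rw [hcv x]
    have hpt : ∀ j : Fin (2 * k), c j * V j x =
        (if j = x then c x else 0) + (if j = x - 1 then c (x - 1) else 0) := by
      intro j
      rw [hV]
      by_cases h1 : j = x
      · subst h1
        simp [hne']
      · by_cases h2 : j = x - 1
        · subst h2
          have hx : (x - 1) + 1 = x := by letI := Fin.instCommRing (2 * k); ring
          simp [h1, hx, hne]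
        · have hx1 : x ≠ j + 1 := by
            intro h; apply h2; rw [h]; letI := Fin.instCommRing (2 * k); ring
          have hx0 : x ≠ j := fun h => h1 h.symm
          simp [hx0, hx1, h1, h2]
    rw [Finset.sum_congr rfl (fun j _ => hpt j), Finset.sum_add_distrib,
        Finset.sum_ite_eq', Finset.sum_ite_eq']
    simp [add_comm]
  set F : ℕ → ℝ := fun t => ∑ s ∈ Finset.range t,
      (-1 : ℝ) ^ (t - 1 - s) * (v (i + ((s + 1 : ℕ) : Fin (2 * k))) : ℝ) with hF
  have hFrec : ∀ t : ℕ, F (t + 1) = (v (i + ((t + 1 : ℕ) : Fin (2 * k))) : ℝ) - F t := by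
    intro t
    simp only [hF]
    rw [Finset.sum_range_succ]
    have hcg : ∀ s ∈ Finset.range t,
        (-1 : ℝ) ^ (t + 1 - 1 - s) * (v (i + ((s + 1 : ℕ) : Fin (2 * k))) : ℝ)
          = -((-1 : ℝ) ^ (t - 1 - s) * (v (i + ((s + 1 : ℕ) : Fin (2 * k))) : ℝ)) := by
      intro s hs
      rw [Finset.mem_range] at hs
      have h : t + 1 - 1 - s = (t - 1 - s) + 1 := by omega
      rw [h, pow_succ]; ring
    rw [Finset.sum_congr rfl hcg]
    have h0 : t + 1 - 1 - t = 0 := by omega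
    rw [h0]
    simp [Finset.sum_neg_distrib]
    ring
  have main : ∀ (c : Fin (2 * k) → ℝ), (∀ j, 0 ≤ c j) →
      (∀ x, (v x : ℝ) = ∑ j, c j * V j x) →
      ∀ t : ℕ, c (i + (t : Fin (2 * k))) = F t := by
    intro c hc0 hcv t
    induction t with
    | zero =>
        have h := key c hcv i
        rw [hi] at h
        push_cast at h
        have hci : c i = 0 := by
          have := hc0 (i - 1); have := hc0 i; linarith
        simp [hF, hci]
    | succ t ih =>
        have h := key c hcv (i + ((t + 1 : ℕ) : Fin (2 * k)))
        have hsub : i + ((t + 1 : ℕ) : Fin (2 * k)) - 1 = i + ((t : ℕ) : Fin (2 * k)) := by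
          push_cast
          letI := Fin.instCommRing (2 * k); ring
        rw [hsub, ih] at h
        rw [hFrec t]
        linarith
  refine ⟨?_, ?_, ?_⟩
  · intro c' h0 hv
    funext j
    have hj : i + (((j - i).val : ℕ) : Fin (2 * k)) = j := by
      rw [Fin.cast_val_eq_self]; letI := Fin.instCommRing (2 * k); ring
    have h1 := main c' h0 hv (j - i).val
    have h2 := main c hc0 hcv (j - i).val
    rw [hj] at h1 h2
    rw [h1, h2]
  · intro j
    have hj : i + (((j - i).val : ℕ) : Fin (2 * k)) = j := by
      rw [Fin.cast_val_eq_self]; letI := Fin.instCommRing (2 * k); ring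
    have h2 := main c hc0 hcv (j - i).val
    rw [hj] at h2
    set t := (j - i).val
    set m : ℤ := ∑ s ∈ Finset.range t, (-1 : ℤ) ^ (t - 1 - s) * v (i + ((s + 1 : ℕ) : Fin (2 * k))) with hm
    have hcj : c j = (m : ℝ) := by
      rw [h2]
      simp only [hF, hm]
      push_cast
      ring
    have hm0 : 0 ≤ m := by
      have := hc0 j
      rw [hcj] at this
      exact_mod_cast this
    refine ⟨m.toNat, ?_⟩
    rw [hcj]
    norm_cast
    omega
  · intro t _
    have := main c hc0 hcv t
    rw [hF] at this
    exact this
end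

section
/- For lattice polytopes P and Q, μ_idp(P × Q) = max{μ_idp(P), μ_idp(Q)}, where μ_idp(R) is the smallest positive integer N such that nR is normal for all n ≥ N. -/
open Pointwise

/-- `P` is a lattice polytope: the convex hull of a nonempty finite set of lattice points. -/
def IsLatticePolytope {ι : Type} [Fintype ι] (P : Set (ι → ℝ)) : Prop :=
  ∃ S : Finset (ι → ℤ), S.Nonempty ∧
    P = convexHull ℝ ((fun x : ι → ℤ => fun i => (x i : ℝ)) '' ↑S)

/-- `P` is normal: for every `n ≥ 1`, every lattice point of `nP` is a sum of
`n` lattice points of `P`. -/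
def IsNormalPolytope {ι : Type} [Fintype ι] (P : Set (ι → ℝ)) : Prop :=
  ∀ n : ℕ, 0 < n → ∀ x : ι → ℤ, (fun i => (x i : ℝ)) ∈ (n : ℝ) • P →
    ∃ y : Fin n → (ι → ℤ), (∀ j, (fun i => (y j i : ℝ)) ∈ P) ∧ ∀ i, x i = ∑ j, y j i

/-- The product polytope `P × Q` inside `ℝ^{ι ⊕ κ}`. -/
def prodPolytope {ι κ : Type} (P : Set (ι → ℝ)) (Q : Set (κ → ℝ)) :
    Set (ι ⊕ κ → ℝ) :=
  {z | (fun i => z (Sum.inl i)) ∈ P ∧ (fun j => z (Sum.inr j)) ∈ Q}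

lemma smul_prodPolytope {ι κ : Type} (c : ℝ) (P : Set (ι → ℝ)) (Q : Set (κ → ℝ)) :
    c • prodPolytope P Q = prodPolytope (c • P) (c • Q) := by
  ext z
  constructor
  · rintro ⟨w, ⟨hw1, hw2⟩, rfl⟩
    exact ⟨⟨_, hw1, rfl⟩, ⟨_, hw2, rfl⟩⟩
  · rintro ⟨⟨a, ha, hza⟩, ⟨b, hb, hzb⟩⟩
    refine ⟨Sum.elim a b, ⟨ha, hb⟩, ?_⟩
    funext s
    cases s with
    | inl i => exact congrFun hza i
    | inr k => exact congrFun hzb k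

lemma normal_prod {ι κ : Type} [Fintype ι] [Fintype κ]
    {A : Set (ι → ℝ)} {B : Set (κ → ℝ)}
    (hA : IsNormalPolytope A) (hB : IsNormalPolytope B) :
    IsNormalPolytope (prodPolytope A B) := by
  intro n hn x hx
  rw [smul_prodPolytope] at hx
  obtain ⟨hx1, hx2⟩ := hx
  obtain ⟨y, hy, hysum⟩ := hA n hn (fun i => x (Sum.inl i)) hx1
  obtain ⟨z, hz, hzsum⟩ := hB n hn (fun k => x (Sum.inr k)) hx2
  refine ⟨fun j => Sum.elim (y j) (z j), fun j => ⟨hy j, hz j⟩, fun s => ?_⟩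
  cases s with
  | inl i => exact hysum i
  | inr k => exact hzsum k

lemma normal_prod_left {ι κ : Type} [Fintype ι] [Fintype κ]
    {A : Set (ι → ℝ)} {B : Set (κ → ℝ)} (q : κ → ℤ)
    (hq : (fun k => (q k : ℝ)) ∈ B)
    (h : IsNormalPolytope (prodPolytope A B)) : IsNormalPolytope A := by
  intro n hn x hx
  have hmem : (fun s => ((Sum.elim x (fun k => (n : ℤ) * q k) : ι ⊕ κ → ℤ) s : ℝ))
      ∈ (n : ℝ) • prodPolytope A B := by
    rw [smul_prodPolytope]
    refine ⟨hx, ⟨fun k => (q k : ℝ), hq, ?_⟩⟩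
    funext k
    show (n : ℝ) * (q k : ℝ) = ((n : ℤ) * q k : ℤ)
    push_cast
    ring
  obtain ⟨u, hu, husum⟩ := h n hn _ hmem
  exact ⟨fun j => fun i => u j (Sum.inl i), fun j => (hu j).1, fun i => husum (Sum.inl i)⟩

lemma normal_prod_right {ι κ : Type} [Fintype ι] [Fintype κ]
    {A : Set (ι → ℝ)} {B : Set (κ → ℝ)} (p : ι → ℤ)
    (hp : (fun i => (p i : ℝ)) ∈ A)
    (h : IsNormalPolytope (prodPolytope A B)) : IsNormalPolytope B := by
  intro n hn x hx
  have hmem : (fun s => ((Sum.elim (fun i => (n : ℤ) * p i) x : ι ⊕ κ → ℤ) s : ℝ))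
      ∈ (n : ℝ) • prodPolytope A B := by
    rw [smul_prodPolytope]
    refine ⟨⟨fun i => (p i : ℝ), hp, ?_⟩, hx⟩
    funext i
    show (n : ℝ) * (p i : ℝ) = ((n : ℤ) * p i : ℤ)
    push_cast
    ring
  obtain ⟨u, hu, husum⟩ := h n hn _ hmem
  exact ⟨fun j => fun k => u j (Sum.inr k), fun j => (hu j).2, fun k => husum (Sum.inr k)⟩

lemma lattice_point_mem {ι : Type} [Fintype ι] {P : Set (ι → ℝ)}
    (hP : IsLatticePolytope P) : ∃ p : ι → ℤ, (fun i => (p i : ℝ)) ∈ P := by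
  obtain ⟨S, ⟨p, hp⟩, rfl⟩ := hP
  exact ⟨p, subset_convexHull ℝ _ ⟨p, by simpa using hp, rfl⟩⟩

lemma lattice_point_smul {ι : Type} [Fintype ι] {P : Set (ι → ℝ)} {p : ι → ℤ}
    (hp : (fun i => (p i : ℝ)) ∈ P) (n : ℕ) :
    (fun i => (((n : ℤ) * p i : ℤ) : ℝ)) ∈ (n : ℝ) • P := by
  refine ⟨fun i => (p i : ℝ), hp, ?_⟩
  funext i
  show (n : ℝ) * (p i : ℝ) = ((n : ℤ) * p i : ℤ)
  push_cast
  ring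

/-- `μ_idp(P × Q) = max{μ_idp(P), μ_idp(Q)}`. -/
theorem stmt_15 {ι κ : Type} [Fintype ι] [Fintype κ]
    (P : Set (ι → ℝ)) (Q : Set (κ → ℝ))
    (hP : IsLatticePolytope P) (hQ : IsLatticePolytope Q)
    (NP NQ NPQ : ℕ)
    (hNP : IsLeast {N : ℕ | 0 < N ∧ ∀ n, N ≤ n → IsNormalPolytope ((n : ℝ) • P)} NP)
    (hNQ : IsLeast {N : ℕ | 0 < N ∧ ∀ n, N ≤ n → IsNormalPolytope ((n : ℝ) • Q)} NQ)
    (hNPQ : IsLeast {N : ℕ | 0 < N ∧ ∀ n, N ≤ n →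
      IsNormalPolytope ((n : ℝ) • prodPolytope P Q)} NPQ) :
    NPQ = max NP NQ := by
  obtain ⟨p, hp⟩ := lattice_point_mem hP
  obtain ⟨q, hq⟩ := lattice_point_mem hQ
  apply le_antisymm
  · apply hNPQ.2
    refine ⟨lt_of_lt_of_le hNP.1.1 (le_max_left _ _), fun n hn => ?_⟩
    rw [smul_prodPolytope]
    exact normal_prod (hNP.1.2 n (le_trans (le_max_left _ _) hn))
      (hNQ.1.2 n (le_trans (le_max_right _ _) hn))
  · apply max_le
    · apply hNP.2
      refine ⟨hNPQ.1.1, fun n hn => ?_⟩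
      have h := hNPQ.1.2 n hn
      rw [smul_prodPolytope] at h
      exact normal_prod_left (fun k => (n : ℤ) * q k) (lattice_point_smul hq n) h
    · apply hNQ.2
      refine ⟨hNPQ.1.1, fun n hn => ?_⟩
      have h := hNPQ.1.2 n hn
      rw [smul_prodPolytope] at h
      exact normal_prod_right (fun i => (n : ℤ) * p i) (lattice_point_smul hp n) h
end
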